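/- Let (Q,·,\,/) be a right Bol loop with identity e and define x∘y = (y·(x·y⁻¹))·y, where y⁻¹ := y\e. Then (Q,∘) is a middle Bol loop: it is a loop with identity e and it satisfies the middle Bol identity x∘((y∘z)\'x) = (x/'z)∘(y\'x) for all x,y,z∈Q, where \' and /' denote the left and right divisions of (Q,∘). -/
import Mathlib


/-- A loop `(L, ·, \, /)` with identity `e`: `mul` is the multiplication,
`ld` the left division (`ld x y = x \ y`), `rd` the right division (`rd x y = x / y`). -/
structure LoopStr (α : Type*) where
  mul : α → α → α
  ld : α → α → α
  rd : α → α → α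
  e : α
  mul_ld : ∀ x y, mul x (ld x y) = y
  rd_mul : ∀ x y, mul (rd y x) x = y
  ld_mul : ∀ x y, ld x (mul x y) = y
  mul_rd : ∀ x y, rd (mul y x) x = y
  e_mul : ∀ x, mul e x = x
  mul_e : ∀ x, mul x e = x

namespace LoopStr

variable {α : Type*}

/-- The middle Bol identity `x(yz \ x) = (x/z)(y \ x)`. -/
def IsMiddleBol (Q : LoopStr α) : Prop :=
  ∀ x y z, Q.mul x (Q.ld (Q.mul y z) x) = Q.mul (Q.rd x z) (Q.ld y x)

/-- The subgroup `A` of permutations of `L` consists of automorphisms of `(L,·)`,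
i.e. `A ≤ AUT(L,·)`. -/
def IsAutSubgroup (Q : LoopStr α) (A : Subgroup (Equiv.Perm α)) : Prop :=
  ∀ θ ∈ A, ∀ x y, θ (Q.mul x y) = Q.mul (θ x) (θ y)

/-- Holomorph multiplication `(α,x)∘(β,y) = (αβ, xβ·y)`.  Maps are written on the
right and composed left to right, so `αβ` ("first `α`, then `β`") is `β * α`
in Mathlib's convention, and `xβ` is `β x`. -/
def hmul (Q : LoopStr α) (A : Subgroup (Equiv.Perm α)) (p q : A × α) : A × α :=
  (q.1 * p.1, Q.mul ((q.1 : Equiv.Perm α) p.2) q.2)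

end LoopStr

/-- Right Bol identity `((x·y)·z)·y = x·((y·z)·y)`. -/
def LoopStr.IsRightBol {α : Type*} (Q : LoopStr α) : Prop :=
  ∀ x y z, Q.mul (Q.mul (Q.mul x y) z) y = Q.mul x (Q.mul (Q.mul y z) y)

namespace LoopStr

variable {α : Type*} (Q : LoopStr α)

/-- `x⁻¹ = x \ e`. -/
def inv (x : α) : α := Q.ld x Q.e

lemma mul_inv (x : α) : Q.mul x (Q.inv x) = Q.e := Q.mul_ld x Q.e

lemma right_cancel {a b x : α} (h : Q.mul a x = Q.mul b x) : a = b := by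
  have := congrArg (fun t => Q.rd t x) h
  simpa only [Q.mul_rd] using this

lemma left_cancel {a b x : α} (h : Q.mul x a = Q.mul x b) : a = b := by
  have := congrArg (fun t => Q.ld x t) h
  simpa only [Q.ld_mul] using this

lemma rip (hRB : Q.IsRightBol) (a x : α) :
    Q.mul (Q.mul a x) (Q.inv x) = a := by
  apply Q.right_cancel (x := x)
  have h := hRB a x (Q.inv x)
  rw [Q.mul_inv, Q.e_mul] at h
  exact h

lemma inv_mul (hRB : Q.IsRightBol) (x : α) : Q.mul (Q.inv x) x = Q.e := by
  apply Q.right_cancel (x := Q.inv x)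
  rw [Q.rip hRB, Q.e_mul]

lemma inv_inv (hRB : Q.IsRightBol) (x : α) : Q.inv (Q.inv x) = x := by
  apply Q.left_cancel (x := Q.inv x)
  rw [Q.mul_inv, Q.inv_mul hRB]

lemma rip' (hRB : Q.IsRightBol) (a x : α) : Q.mul (Q.mul a (Q.inv x)) x = a := by
  have h := Q.rip hRB a (Q.inv x)
  rwa [Q.inv_inv hRB] at h

lemma rd_eq (hRB : Q.IsRightBol) (a x : α) : Q.rd a x = Q.mul a (Q.inv x) := by
  apply Q.right_cancel (x := x)
  rw [Q.rip' hRB]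
  exact Q.rd_mul x a

/-- The key identity: `(y(x·y⁻¹))y = y⁻¹ \ x`. -/
lemma star_eq (hRB : Q.IsRightBol) (a w : α) :
    Q.mul (Q.mul w (Q.mul a (Q.ld w Q.e))) w = Q.ld (Q.inv w) a := by
  show Q.mul (Q.mul w (Q.mul a (Q.inv w))) w = Q.ld (Q.inv w) a
  apply Q.left_cancel (x := Q.inv w)
  rw [Q.mul_ld]
  have h := hRB (Q.inv w) w (Q.mul a (Q.inv w))
  rw [Q.inv_mul hRB, Q.e_mul, Q.rip' hRB] at h
  exact h.symm

lemma ld_e (x : α) : Q.ld Q.e x = x := by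
  have h := Q.ld_mul Q.e x
  rwa [Q.e_mul] at h

lemma inv_e : Q.inv Q.e = Q.e := by
  show Q.ld Q.e Q.e = Q.e
  have h := Q.ld_mul Q.e Q.e
  rwa [Q.mul_e] at h

lemma star (hRB : Q.IsRightBol) (s b t x : α) (hx : Q.mul b t = x) :
    Q.mul (Q.rd (Q.mul s (Q.mul b x)) x) t = Q.mul s x := by
  have hxt : Q.mul x (Q.inv t) = b := by
    rw [← Q.rd_eq hRB, ← hx]
    exact Q.mul_rd t b
  have A := hRB s x (Q.inv t)
  rw [hxt] at A
  have B := Q.mul_rd x (Q.mul (Q.mul s x) (Q.inv t))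
  rw [A] at B
  rw [B, Q.rip' hRB]

lemma main' (hRB : Q.IsRightBol) (s a x : α) :
    Q.ld (Q.rd a x) x = Q.ld (Q.rd (Q.mul s a) x) (Q.mul s x) := by
  have hb : Q.mul (Q.rd a x) x = a := Q.rd_mul x a
  have h := Q.star hRB s (Q.rd a x) (Q.ld (Q.rd a x) x) x (Q.mul_ld _ _)
  rw [hb] at h
  rw [← h, Q.ld_mul]

lemma main (hRB : Q.IsRightBol) (s y x : α) :
    Q.ld (Q.rd (Q.ld s y) x) x = Q.ld (Q.rd y x) (Q.mul s x) := by
  have h := Q.main' hRB s (Q.ld s y) x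
  rwa [Q.mul_ld] at h

end LoopStr

/-- Let `(Q,·,\,/)` be a right Bol loop with identity `e` and define
`x∘y = (y·(x·y⁻¹))·y` where `y⁻¹ := y\e`.  Then `(Q,∘)` is a middle Bol loop: it is a
loop with identity `e` (i.e. there is a loop structure `P` with multiplication `∘` and
identity `e`) and it satisfies the middle Bol identity with respect to its own
divisions. -/
theorem rightBol_star_isMiddleBol {α : Type*} (Q : LoopStr α) (hRB : Q.IsRightBol) :
    ∃ P : LoopStr α,
      (∀ x y, P.mul x y = Q.mul (Q.mul y (Q.mul x (Q.ld y Q.e))) y) ∧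
      P.e = Q.e ∧ P.IsMiddleBol := by
  refine ⟨{
    mul := fun x y => Q.mul (Q.mul y (Q.mul x (Q.ld y Q.e))) y
    ld := fun a x => Q.inv (Q.rd a x)
    rd := fun x z => Q.mul (Q.inv z) x
    e := Q.e
    mul_ld := ?_
    rd_mul := ?_
    ld_mul := ?_
    mul_rd := ?_
    e_mul := ?_
    mul_e := ?_ }, fun _ _ => rfl, rfl, ?_⟩
  · intro x y
    beta_reduce
    rw [Q.star_eq hRB, Q.inv_inv hRB]
    have h := Q.ld_mul (Q.rd x y) y
    rwa [Q.rd_mul] at h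
  · intro x y
    beta_reduce
    rw [Q.star_eq hRB]
    exact Q.ld_mul _ _
  · intro x y
    beta_reduce
    rw [Q.star_eq hRB]
    have h := Q.mul_rd (Q.ld (Q.inv y) x) (Q.inv y)
    rw [Q.mul_ld] at h
    rw [h, Q.inv_inv hRB]
  · intro x y
    beta_reduce
    rw [Q.star_eq hRB]
    exact Q.mul_ld _ _
  · intro x
    beta_reduce
    rw [Q.star_eq hRB]
    exact Q.inv_inv hRB x
  · intro x
    beta_reduce
    rw [Q.star_eq hRB, Q.inv_e, Q.ld_e]
  · intro x y z
    dsimp only [LoopStr.IsMiddleBol]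
    simp only [Q.star_eq hRB, Q.inv_inv hRB]
    exact Q.main hRB (Q.inv z) y x
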